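/- The white multiplication ∇⁺_X absorbs the fixpoint agent on one input, up to a morphism to ▷_X: the function X → X×X, x ↦ (x,x), defines a morphism of open games from ▷_X (which has Σ = X, play P(x',x) = x', equilibria E(x,*) = {x}) to ∇⁺_X ∘ (id_{X⁺} ⊗ η'_X) where η'_X denotes the covariant part of the fixpoint agent feeding the second input (the composite has Σ = X×X, play P((x₁,x₂),x) = x₂, and equilibria requiring x₂'s prediction to match); moreover the function (x₁,x₂) ↦ x₂ defines a morphism in the other direction, but the two are not mutually inverse isomorphisms of open games when |X| ≥ 2. -/

import Mathlib

/-- An open game `(X,S) → (Y,R)`: a set of strategy profiles together with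
play, coplay and equilibrium functions. -/
structure OpenGame (X S Y R : Type) where
  Strat : Type
  play : Strat → X → Y
  coplay : Strat → X → R → S
  equil : X → (Y → R) → Set Strat

namespace OpenGame

/-- Sequential composition: `comp G H` is `H ∘ G` (first `G`, then `H`). -/
def comp {X S Y R Z Q : Type} (G : OpenGame X S Y R) (H : OpenGame Y R Z Q) :
    OpenGame X S Z Q where
  Strat := G.Strat × H.Strat
  play := fun p x => H.play p.2 (G.play p.1 x)
  coplay := fun p x q => G.coplay p.1 x (H.coplay p.2 (G.play p.1 x) q)
  equil := fun x k =>
    {p | p.1 ∈ G.equil x (fun y => H.coplay p.2 y (k (H.play p.2 y))) ∧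
         p.2 ∈ H.equil (G.play p.1 x) k}

/-- Monoidal product of open games. -/
def tensor {X S Y R X' S' Y' R' : Type}
    (G : OpenGame X S Y R) (H : OpenGame X' S' Y' R') :
    OpenGame (X × X') (S × S') (Y × Y') (R × R') where
  Strat := G.Strat × H.Strat
  play := fun p x => (G.play p.1 x.1, H.play p.2 x.2)
  coplay := fun p x r => (G.coplay p.1 x.1 r.1, H.coplay p.2 x.2 r.2)
  equil := fun x k =>
    {p | p.1 ∈ G.equil x.1 (fun y => (k (y, H.play p.2 x.2)).1) ∧
         p.2 ∈ H.equil x.2 (fun y' => (k (G.play p.1 x.1, y')).2)}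

/-- A (globular) morphism of open games: a map of strategy profiles preserving
play, coplay, and mapping equilibria to equilibria. -/
def IsMorphism {X S Y R : Type} (G H : OpenGame X S Y R) (α : G.Strat → H.Strat) : Prop :=
  (∀ σ x, G.play σ x = H.play (α σ) x) ∧
  (∀ σ x r, G.coplay σ x r = H.coplay (α σ) x r) ∧
  (∀ σ x k, σ ∈ G.equil x k → α σ ∈ H.equil x k)

/-- Isomorphism of open games: a bijection of strategy profiles preserving play,
coplay, and equilibria in both directions. -/
def Isomorphic {X S Y R : Type} (G H : OpenGame X S Y R) : Prop :=
  ∃ e : G.Strat ≃ H.Strat,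
    (∀ σ x, G.play σ x = H.play (e σ) x) ∧
    (∀ σ x r, G.coplay σ x r = H.coplay (e σ) x r) ∧
    (∀ σ x k, σ ∈ G.equil x k ↔ e σ ∈ H.equil x k)

/-- The identity open game on `(X,S)`. -/
def idOG (X S : Type) : OpenGame X S X S where
  Strat := Unit
  play := fun _ x => x
  coplay := fun _ _ s => s
  equil := fun _ _ => Set.univ

end OpenGame

open OpenGame

/-- The snake composite `▷_X : (X,1) → (X,1)`. -/
def rtri (X : Type) : OpenGame X Unit X Unit where
  Strat := X
  play := fun x' _ => x'
  coplay := fun _ _ _ => ()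
  equil := fun x _ => {x}

/-- The composite `∇⁺_X ∘ (id_{X⁺} ⊗ η'_X) : (X,1) → (X,1)`:
strategies `X × X`, play `((a,b),x) ↦ b`, equilibria `{(a,b) | a = x ∧ a = b}`. -/
def nablaEta (X : Type) : OpenGame X Unit X Unit where
  Strat := X × X
  play := fun p _ => p.2
  coplay := fun _ _ _ => ()
  equil := fun x _ => {p | p.1 = x ∧ p.1 = p.2}

/-- the diagonal and second projection give morphisms between
`▷_X` and `∇⁺_X ∘ (id ⊗ η'_X)` in both directions, but they are not mutually
inverse when `X` has two distinct elements. -/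
theorem nabla_absorbs_eta (X : Type) :
    IsMorphism (rtri X) (nablaEta X) (fun x => (x, x)) ∧
    IsMorphism (nablaEta X) (rtri X) (fun p => p.2) ∧
    ((∃ a b : X, a ≠ b) → ¬ ∀ p : X × X, (p.2, p.2) = p) := by
  refine ⟨⟨fun σ x => rfl, fun σ x r => rfl, ?_⟩,
    ⟨fun σ x => rfl, fun σ x r => rfl, ?_⟩, ?_⟩
  · intro σ x k h
    simp [rtri, nablaEta] at *
    exact ⟨h, rfl⟩
  · intro σ x k h
    obtain ⟨h1, h2⟩ := h
    simp [rtri, nablaEta] at *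
    rw [← h2, h1]
    exact Set.mem_singleton x
  · rintro ⟨a, b, hab⟩ h
    have := h (a, b)
    exact hab (congrArg Prod.fst this).symm
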